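/- Let f(d) = (( (a-d)^3/(n-1)^2 ) - 4(b-d)^3) / (12(a-b)) for d ∈ [a,b], where a < b and n ≥ 2. Then f attains its minimum at d = b - (b-a)/(2n-1), and the minimum value is (b-a)^2/(3(2n-1)^2). -/

import Mathlib

/-- The distortion-error function `f(d) = ((a-d)^3/(n-1)^2 - 4(b-d)^3)/(12(a-b))`
attains its minimum on `[a,b]` at `d = b - (b-a)/(2n-1)`, with minimum value
`(b-a)^2/(3(2n-1)^2)`. -/
theorem stmt3 (a b : ℝ) (hab : a < b) (n : ℕ) (hn : 2 ≤ n)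
    (f : ℝ → ℝ)
    (hf : ∀ d, f d = ((a - d)^3 / ((n : ℝ) - 1)^2 - 4 * (b - d)^3) / (12 * (a - b))) :
    IsMinOn f (Set.Icc a b) (b - (b - a) / (2 * (n : ℝ) - 1)) ∧
    f (b - (b - a) / (2 * (n : ℝ) - 1)) = (b - a)^2 / (3 * (2 * (n : ℝ) - 1)^2) := by
  have hN : (2:ℝ) ≤ (n:ℝ) := by exact_mod_cast hn
  have hm1 : (1:ℝ) ≤ (n:ℝ) - 1 := by linarith
  have hm0 : ((n:ℝ) - 1) ≠ 0 := by linarith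
  have h2m : (0:ℝ) < 2*(n:ℝ) - 1 := by linarith
  have h2m0 : (2*(n:ℝ) - 1) ≠ 0 := ne_of_gt h2m
  have hL : (0:ℝ) < b - a := by linarith
  have hab0 : a - b ≠ 0 := by linarith
  have hval : f (b - (b - a) / (2 * (n : ℝ) - 1)) = (b - a)^2 / (3 * (2 * (n : ℝ) - 1)^2) := by
    rw [hf]
    field_simp
    ring
  refine ⟨?_, hval⟩
  rw [isMinOn_iff]
  intro d hd
  obtain ⟨hd1, hd2⟩ := hd
  have hu : 0 ≤ d - a := by linarith
  have hv : 0 ≤ b - d := by linarith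
  have key : f d - f (b - (b - a) / (2 * (n : ℝ) - 1)) =
      ((d - a) - 2*((n:ℝ)-1)*(b - d))^2 *
        ((4*((n:ℝ)-1)+1)*(d - a) + 4*((n:ℝ)-1)*(n:ℝ)*(b - d)) /
        (12*(b-a)*((n:ℝ)-1)^2*(2*(n:ℝ)-1)^2) := by
    rw [hf, hf]
    obtain ⟨e, he⟩ : ∃ e, e = (b - a) / (2 * (n : ℝ) - 1) := ⟨_, rfl⟩
    have ha : a = b - e * (2 * (n : ℝ) - 1) := by rw [he]; field_simp; ring
    rw [← he]
    clear he
    subst ha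
    field_simp
    ring
  have hnum : 0 ≤ ((d - a) - 2*((n:ℝ)-1)*(b - d))^2 *
      ((4*((n:ℝ)-1)+1)*(d - a) + 4*((n:ℝ)-1)*(n:ℝ)*(b - d)) := by
    apply mul_nonneg (sq_nonneg _)
    have h1 : 0 ≤ (4*((n:ℝ)-1)+1)*(d - a) := by
      apply mul_nonneg (by linarith) hu
    have h2 : 0 ≤ 4*((n:ℝ)-1)*(n:ℝ)*(b - d) := by
      apply mul_nonneg (by nlinarith) hv
    linarith
  have hden : 0 < 12*(b-a)*((n:ℝ)-1)^2*(2*(n:ℝ)-1)^2 := by positivity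
  have := div_nonneg hnum (le_of_lt hden)
  linarith [key ▸ this]
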